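/- Let G be a torsion-free nilpotent group and let g ∈ G with g ∉ Z(G). Then ⟨g⟩^G ∩ Z(G) ≤ cc_G(g), i.e. every central element of the normal closure of g lies in the co-centraliser of g. -/

import Mathlib

open Subgroup
open scoped commutatorElement

/-- The co-centraliser of `g` in `G`: the subgroup generated by all
commutators `[g,w] = g⁻¹ * w⁻¹ * g * w`. -/
def coCentraliser {G : Type*} [Group G] (g : G) : Subgroup G :=
  Subgroup.closure {x | ∃ w : G, x = g⁻¹ * w⁻¹ * g * w}

section Aux


variable {G : Type*} [Group G]

private lemma pow_mul_of_central {x y z : G} (hz : ∀ w : G, w * z = z * w)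
    (hxy : x * y = y * x * z) (m : ℕ) : x ^ m * y = y * x ^ m * z ^ m := by
  induction m with
  | zero => simp
  | succ m ih =>
    calc x ^ (m+1) * y = x * (x ^ m * y) := by rw [pow_succ']; rw [mul_assoc]
      _ = x * (y * x ^ m * z ^ m) := by rw [ih]
      _ = (x * y) * (x ^ m * z ^ m) := by simp [mul_assoc]
      _ = (y * x * z) * (x ^ m * z ^ m) := by rw [hxy]
      _ = y * (x * (z * x ^ m)) * z ^ m := by simp [mul_assoc]
      _ = y * (x * (x ^ m * z)) * z ^ m := by rw [hz (x ^ m)]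
      _ = y * x ^ (m+1) * z ^ (m+1) := by rw [pow_succ', pow_succ]; simp [mul_assoc, hz (z ^ m)]

private lemma mk_pow' (N : Subgroup G) [N.Normal] (x : G) (n : ℕ) :
    ((x ^ n : G) : G ⧸ N) = ((x : G ⧸ N)) ^ n := by
  exact map_pow (QuotientGroup.mk' N) x n

private lemma center_quot_tf
    (hZ : ∀ x ∈ center G, ∀ n : ℕ, 0 < n → x ^ n = 1 → x = 1) :
    ∀ q ∈ center (G ⧸ center G), ∀ n : ℕ, 0 < n → q ^ n = 1 → q = 1 := by
  intro q hq n hn hqn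
  obtain ⟨x, rfl⟩ := QuotientGroup.mk_surjective q
  have hxn : x ^ n ∈ center G := by
    rw [← QuotientGroup.eq_one_iff (N := center G), mk_pow']
    exact hqn
  rw [QuotientGroup.eq_one_iff, Subgroup.mem_center_iff]
  intro y
  have hzmem : x⁻¹ * y⁻¹ * x * y ∈ center G := by
    have h1 : ((y * x : G) : G ⧸ center G) = ((x * y : G) : G ⧸ center G) := by
      have := Subgroup.mem_center_iff.mp hq (y : G ⧸ center G)
      simpa using this
    have h2 := QuotientGroup.eq.mp h1
    have h3 : (y * x)⁻¹ * (x * y) = x⁻¹ * y⁻¹ * x * y := by group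
    rwa [h3] at h2
  set z := x⁻¹ * y⁻¹ * x * y with hzdef
  have hz : ∀ w : G, w * z = z * w := fun w => Subgroup.mem_center_iff.mp hzmem w
  have hxy : x * y = y * x * z := by rw [hzdef]; group
  have hp := pow_mul_of_central hz hxy n
  have hc : x ^ n * y = y * x ^ n := (Subgroup.mem_center_iff.mp hxn y).symm
  have hzn : z ^ n = 1 := by
    have h2 : y * x ^ n * z ^ n = y * x ^ n * 1 := by rw [mul_one, ← hp, hc]
    exact mul_left_cancel h2
  have hz1 : z = 1 := hZ z hzmem n hn hzn
  have : x * y = y * x := by rw [hxy, hz1, mul_one]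
  exact this.symm

end Aux


private lemma tf_of_center_tf : ∀ (c : ℕ) (G : Type u) [Group G] [Group.IsNilpotent G],
    Group.nilpotencyClass G ≤ c →
    (∀ x ∈ center G, ∀ n : ℕ, 0 < n → x ^ n = 1 → x = 1) →
    ∀ x : G, ∀ n : ℕ, 0 < n → x ^ n = 1 → x = 1 := by
  intro c
  induction c with
  | zero =>
    intro G _ _ hc _ x n _ _
    haveI : Subsingleton G :=
      nilpotencyClass_zero_iff_subsingleton.mp (Nat.le_zero.mp hc)
    exact Subsingleton.elim x 1
  | succ c ih =>
    intro G _ _ hc hZ x n hn hxn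
    have hq : Group.nilpotencyClass (G ⧸ center G) ≤ c := by
      rw [nilpotencyClass_quotient_center]
      omega
    have hquot := ih (G ⧸ center G) hq (center_quot_tf hZ)
    have h1 : ((x : G ⧸ center G)) ^ n = 1 := by
      have : ((x ^ n : G) : G ⧸ center G) = ((x : G ⧸ center G)) ^ n :=
        map_pow (QuotientGroup.mk' (center G)) x n
      rw [← this, hxn]
      rfl
    have h2 : ((x : G ⧸ center G)) = 1 := hquot _ n hn h1
    exact hZ x ((QuotientGroup.eq_one_iff x).mp h2) n hn hxn

private lemma quot_center_tf {G : Type*} [Group G] [Group.IsNilpotent G]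
    (htf : ∀ g : G, g ≠ 1 → ¬IsOfFinOrder g) :
    ∀ q : G ⧸ center G, ∀ n : ℕ, 0 < n → q ^ n = 1 → q = 1 := by
  have hZ : ∀ x ∈ center G, ∀ n : ℕ, 0 < n → x ^ n = 1 → x = 1 := by
    intro x _ n hn hxn
    by_contra hx
    exact htf x hx (isOfFinOrder_iff_pow_eq_one.mpr ⟨n, hn, hxn⟩)
  intro q n hn hq
  exact tf_of_center_tf (Group.nilpotencyClass (G ⧸ center G)) (G ⧸ center G) le_rfl
    (center_quot_tf hZ) q n hn hq

section CC

variable {G : Type*} [Group G] (g : G)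

private lemma gen_mem_cc (w : G) : g⁻¹ * w⁻¹ * g * w ∈ coCentraliser g :=
  subset_closure ⟨w, rfl⟩

private lemma conj_mem_cc {x : G} (hx : x ∈ coCentraliser g) (v : G) :
    v * x * v⁻¹ ∈ coCentraliser g := by
  induction hx using closure_induction with
  | mem x hxs =>
    obtain ⟨w, rfl⟩ := hxs
    have hid : v * (g⁻¹ * w⁻¹ * g * w) * v⁻¹ =
        (g⁻¹ * (v⁻¹)⁻¹ * g * v⁻¹)⁻¹ * (g⁻¹ * (w * v⁻¹)⁻¹ * g * (w * v⁻¹)) := by group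
    rw [hid]
    exact mul_mem (inv_mem (gen_mem_cc g v⁻¹)) (gen_mem_cc g (w * v⁻¹))
  | one => simpa using (coCentraliser g).one_mem
  | mul x y _ _ hx hy =>
    have hid : v * (x * y) * v⁻¹ = (v * x * v⁻¹) * (v * y * v⁻¹) := by group
    rw [hid]; exact mul_mem hx hy
  | inv x _ hx =>
    have hid : v * x⁻¹ * v⁻¹ = (v * x * v⁻¹)⁻¹ := by group
    rw [hid]; exact inv_mem hx

private lemma cc_normal : (coCentraliser g).Normal :=
  ⟨fun _ hx v => conj_mem_cc g hx v⟩

private lemma zpow_comm_mem_cc (y : G) : ∀ k : ℤ,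
    (g ^ k)⁻¹ * y⁻¹ * g ^ k * y ∈ coCentraliser g := by
  intro k
  induction k using Int.induction_on with
  | zero =>
    have hid : (g ^ (0:ℤ))⁻¹ * y⁻¹ * g ^ (0:ℤ) * y = 1 := by group
    rw [hid]; exact one_mem _
  | succ k ih =>
    have hid : (g ^ ((k:ℤ)+1))⁻¹ * y⁻¹ * g ^ ((k:ℤ)+1) * y =
        g⁻¹ * ((g ^ (k:ℤ))⁻¹ * y⁻¹ * g ^ (k:ℤ) * y) * (g⁻¹)⁻¹ * (g⁻¹ * y⁻¹ * g * y) := by group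
    rw [hid]
    exact mul_mem (conj_mem_cc g ih g⁻¹) (gen_mem_cc g y)
  | pred k ih =>
    have hid : (g ^ (-(k:ℤ)-1))⁻¹ * y⁻¹ * g ^ (-(k:ℤ)-1) * y =
        (g * ((g ^ (-(k:ℤ)))⁻¹ * y⁻¹ * g ^ (-(k:ℤ)) * y) * g⁻¹) *
          (g * (g⁻¹ * y⁻¹ * g * y)⁻¹ * g⁻¹) := by group
    rw [hid]
    exact mul_mem (conj_mem_cc g ih g) (conj_mem_cc g (inv_mem (gen_mem_cc g y)) g)

private lemma ncl_normal : (zpowers g ⊔ coCentraliser g).Normal := by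
  haveI := cc_normal g
  constructor
  intro x hx v
  rw [← SetLike.mem_coe, Subgroup.mul_normal] at hx
  obtain ⟨a, ha, c, hc, rfl⟩ := hx
  obtain ⟨k, rfl⟩ := mem_zpowers_iff.mp ha
  have hid : v * (g ^ k * c) * v⁻¹ = (v * g ^ k * v⁻¹) * (v * c * v⁻¹) := by group
  rw [hid]
  refine mul_mem ?_ ((le_sup_right : coCentraliser g ≤ _) (conj_mem_cc g hc v))
  have h2 : v * g ^ k * v⁻¹ = (v * g * v⁻¹) ^ k := by
    rw [conj_zpow]
  rw [h2]
  refine zpow_mem ?_ k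
  have h3 : v * g * v⁻¹ = g * (g⁻¹ * (v⁻¹)⁻¹ * g * v⁻¹) := by group
  rw [h3]
  exact mul_mem ((le_sup_left : zpowers g ≤ _) (mem_zpowers g))
    ((le_sup_right : coCentraliser g ≤ _) (gen_mem_cc g v⁻¹))

private lemma ncl_le : normalClosure {g} ≤ zpowers g ⊔ coCentraliser g := by
  haveI := ncl_normal g
  refine normalClosure_le_normal ?_
  rw [Set.singleton_subset_iff]
  exact (le_sup_left : zpowers g ≤ _) (mem_zpowers g)

end CC

private def chain {H : Type*} [Group H] (N : Subgroup H) : ℕ → Subgroup H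
  | 0 => N
  | (i+1) => ⁅chain N i, (⊤ : Subgroup H)⁆

private lemma chain_succ {H : Type*} [Group H] (N : Subgroup H) (i : ℕ) :
    chain N (i+1) = ⁅chain N i, (⊤ : Subgroup H)⁆ := rfl

private lemma chain_normal {H : Type*} [Group H] (N : Subgroup H) [hN : N.Normal] :
    ∀ i, (chain N i).Normal
  | 0 => hN
  | (i+1) => by
    haveI := chain_normal N i
    exact Subgroup.commutator_normal _ _

private lemma chain_le {H : Type*} [Group H] (N : Subgroup H) [hN : N.Normal] :
    ∀ i, chain N i ≤ N
  | 0 => le_rfl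
  | (i+1) => by
    haveI := chain_normal N i
    exact (Subgroup.commutator_le_left _ _).trans (chain_le N i)

private lemma chain_le_lcs {H : Type*} [Group H] (N : Subgroup H) :
    ∀ i, chain N i ≤ (⊤ : Subgroup H).lowerCentralSeries i
  | 0 => le_top
  | (i+1) => by
    rw [chain_succ, _root_.lowerCentralSeries_succ]
    exact Subgroup.commutator_mono (chain_le_lcs N i) le_rfl

section Key

variable {H : Type*} [Group H]

private lemma key_torsion [Group.IsNilpotent H] (h : H) (n : ℕ) (hn : 0 < n)
    (hmem : h ^ n ∈ coCentraliser h) : ∃ m : ℕ, 0 < m ∧ h ^ m = 1 := by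
  haveI hCn := cc_normal h
  haveI hNn := ncl_normal h
  set C := coCentraliser h with hC
  set N := zpowers h ⊔ C with hNdef
  haveI hchainN : ∀ i, (chain N i).Normal := chain_normal N
  have hhN : h ∈ N := (le_sup_left : zpowers h ≤ N) (mem_zpowers h)
  -- centrality of chain quotients
  have central : ∀ i, ∀ u ∈ chain N (i+1), ∀ q : H ⧸ chain N (i+2),
      q * ((QuotientGroup.mk' (chain N (i+2))) u) = ((QuotientGroup.mk' (chain N (i+2))) u) * q := by
    intro i u hu q
    obtain ⟨y, rfl⟩ := QuotientGroup.mk_surjective q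
    show ((y * u : H) : H ⧸ chain N (i+2)) = ((u * y : H) : H ⧸ chain N (i+2))
    rw [QuotientGroup.eq]
    have hid : (y * u)⁻¹ * (u * y) = ⁅u⁻¹, y⁻¹⁆ := by
      rw [commutatorElement_def]; group
    rw [hid, chain_succ]
    exact Subgroup.commutator_mem_commutator (inv_mem hu) (mem_top _)
  -- base case: x ^ n ∈ chain N 1 for all x ∈ N
  have hCle : C ≤ chain N 1 := by
    rw [hC, coCentraliser, chain_succ]
    refine closure_le _ |>.mpr ?_
    rintro x ⟨w, rfl⟩
    have hid : h⁻¹ * w⁻¹ * h * w = ⁅h⁻¹, w⁻¹⁆ := by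
      rw [commutatorElement_def]; group
    rw [hid]
    exact Subgroup.commutator_mem_commutator (inv_mem hhN) (mem_top _)
  have base : ∀ x ∈ N, x ^ n ∈ chain N 1 := by
    intro x hx
    refine hCle ?_
    -- work in H ⧸ C
    have hxq : ((x : H) : H ⧸ C) ∈ (N.map (QuotientGroup.mk' C)) :=
      mem_map_of_mem _ hx
    rw [hNdef, Subgroup.map_sup] at hxq
    have hmapC : C.map (QuotientGroup.mk' C) = ⊥ := by
      rw [Subgroup.map_eq_bot_iff, QuotientGroup.ker_mk']
    rw [hmapC, sup_bot_eq, MonoidHom.map_zpowers] at hxq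
    obtain ⟨k, hk⟩ := mem_zpowers_iff.mp hxq
    rw [QuotientGroup.mk'_apply] at hk
    have hq1 : ((x ^ n : H) : H ⧸ C) = 1 := by
      have e1 : ((x ^ n : H) : H ⧸ C) = (((x : H) : H ⧸ C)) ^ n :=
        map_pow (QuotientGroup.mk' C) x n
      have e2 : ((h ^ n : H) : H ⧸ C) = 1 := (QuotientGroup.eq_one_iff _).mpr hmem
      have e3 : (((h : H) : H ⧸ C)) ^ n = 1 := by
        have := map_pow (QuotientGroup.mk' C) h n
        simp only [QuotientGroup.mk'_apply] at this
        rw [← this]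
        exact e2
      calc ((x ^ n : H) : H ⧸ C) = (((x : H) : H ⧸ C)) ^ n := e1
        _ = (((((h : H) : H ⧸ C)) ^ k)) ^ n := by rw [hk]
        _ = ((((h : H) : H ⧸ C)) ^ n) ^ k := by
            rw [← zpow_natCast, ← zpow_mul, mul_comm, zpow_mul, zpow_natCast]
        _ = 1 := by rw [e3, one_zpow]
    exact (QuotientGroup.eq_one_iff _).mp hq1
  -- inductive exponent bound
  have main : ∀ i, ∃ m : ℕ, 0 < m ∧ ∀ x ∈ N, x ^ m ∈ chain N (i+1) := by
    intro i
    induction i with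
    | zero => exact ⟨n, hn, base⟩
    | succ i ih =>
      obtain ⟨m, hm, hstep⟩ := ih
      refine ⟨m * m, Nat.mul_pos hm hm, ?_⟩
      have claim : ∀ b ∈ chain N (i+1), b ^ m ∈ chain N (i+2) := by
        intro b hb
        set π := QuotientGroup.mk' (chain N (i+2)) with hπ
        suffices hsuff : (π b) ^ m = 1 by
          rw [← map_pow] at hsuff
          exact (QuotientGroup.eq_one_iff _).mp hsuff
        have heq : chain N (i+1) = closure {x : H | ∃ a ∈ chain N i, ∃ y ∈ (⊤ : Subgroup H), ⁅a, y⁆ = x} := by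
          rw [chain_succ]; exact Subgroup.commutator_def _ _
        have hb' : b ∈ closure {x : H | ∃ a ∈ chain N i, ∃ y ∈ (⊤ : Subgroup H), ⁅a, y⁆ = x} := by
          rw [← heq]; exact hb
        clear hb
        induction hb' using closure_induction with
        | mem c hc =>
          obtain ⟨a, ha, y, -, rfl⟩ := hc
          have hayC : ⁅a, y⁆ ∈ chain N (i+1) := by
            rw [chain_succ]
            exact Subgroup.commutator_mem_commutator ha (mem_top _)
          have hccentral : ∀ w : H ⧸ chain N (i+2),
              w * π ⁅a, y⁆ = π ⁅a, y⁆ * w := central i _ hayC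
          have haN : a ∈ N := chain_le N i ha
          have hamem : a ^ m ∈ chain N (i+1) := hstep a haN
          have hamc : ∀ w : H ⧸ chain N (i+2),
              w * π (a ^ m) = π (a ^ m) * w := central i _ hamem
          -- identities in the quotient
          set α := π a with hα
          set β := π y with hβ
          have hcd : π ⁅a, y⁆ = ⁅α, β⁆ := map_commutatorElement _ _ _
          have hz : ∀ w : H ⧸ chain N (i+2), w * ⁅α, β⁆ = ⁅α, β⁆ * w := by
            intro w; rw [← hcd]; exact hccentral w
          have hxy : α * β = β * α * ⁅α, β⁆ :=
            calc α * β = ⁅α, β⁆ * (β * α) := by rw [commutatorElement_def]; group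
              _ = β * α * ⁅α, β⁆ := (hz (β * α)).symm
          have hp := pow_mul_of_central hz hxy m
          have hcomm : α ^ m * β = β * α ^ m := by
            have : π (a ^ m) = α ^ m := map_pow _ _ _
            rw [← this]
            exact (hamc β).symm
          have hzm : ⁅α, β⁆ ^ m = 1 := by
            have h2 : β * α ^ m * ⁅α, β⁆ ^ m = β * α ^ m * 1 := by
              rw [mul_one, ← hp, hcomm]
            exact mul_left_cancel h2
          rw [hcd, hzm]
        | one => simp
        | mul x y hx hy ihx ihy =>
          have hx' : x ∈ chain N (i+1) := by rw [heq]; exact hx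
          have hcxy : Commute (π x) (π y) := (central i x hx' (π y)).symm
          rw [map_mul, Commute.mul_pow hcxy, ihx, ihy, one_mul]
        | inv x hx ihx =>
          rw [map_inv, inv_pow, ihx, inv_one]
      intro x hx
      rw [pow_mul]
      exact claim _ (hstep x hx)
  obtain ⟨k, hk⟩ := _root_.nilpotent_iff_lowerCentralSeries.mp ‹Group.IsNilpotent H›
  obtain ⟨m, hm, hP⟩ := main k
  refine ⟨m, hm, ?_⟩
  have h1 : h ^ m ∈ chain N (k+1) := hP h hhN
  have h2 : chain N (k+1) ≤ (⊤ : Subgroup H).lowerCentralSeries (k+1) := chain_le_lcs N (k+1)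
  have h3 : (⊤ : Subgroup H).lowerCentralSeries (k+1) = ⊥ := by
    rw [_root_.lowerCentralSeries_succ, hk]
    exact Subgroup.commutator_bot_left _
  have := h2 h1
  rw [h3, Subgroup.mem_bot] at this
  exact this

end Key


theorem centre_inter_normalClosure_le_coCentraliser (G : Type*) [Group G]
    (htf : ∀ g : G, g ≠ 1 → ¬IsOfFinOrder g) [Group.IsNilpotent G]
    (g : G) (hg : g ∉ Subgroup.center G) :
    Subgroup.normalClosure {g} ⊓ Subgroup.center G ≤ coCentraliser g := by
  intro z hz
  rw [Subgroup.mem_inf] at hz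
  obtain ⟨hzN, hzZ⟩ := hz
  haveI := cc_normal g
  have hzS : z ∈ zpowers g ⊔ coCentraliser g := ncl_le g hzN
  rw [← SetLike.mem_coe, Subgroup.mul_normal] at hzS
  obtain ⟨a, ha, c, hc, rfl⟩ := hzS
  obtain ⟨k, rfl⟩ := mem_zpowers_iff.mp ha
  by_cases hk : k = 0
  · subst hk; simpa using hc
  · exfalso
    set π := QuotientGroup.mk' (center G) with hπ
    have hπz : π (g ^ k * c) = 1 := (QuotientGroup.eq_one_iff _).mpr hzZ
    have hmaple : (coCentraliser g).map π ≤ coCentraliser (π g) := by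
      rw [coCentraliser, MonoidHom.map_closure]
      refine closure_le _ |>.mpr ?_
      rintro x ⟨x', ⟨w, rfl⟩, rfl⟩
      refine subset_closure ⟨π w, ?_⟩
      simp [map_mul, map_inv]
    have hπc : π c ∈ coCentraliser (π g) := hmaple (mem_map_of_mem _ hc)
    have hpow : (π g) ^ k ∈ coCentraliser (π g) := by
      have h1 : π (g ^ k) * π c = 1 := by rw [← map_mul]; exact hπz
      have h2 : (π g) ^ k = (π c)⁻¹ := by
        rw [← map_zpow]
        exact eq_inv_of_mul_eq_one_left h1
      rw [h2]; exact inv_mem hπc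
    set m0 := k.natAbs with hm0
    have hn0 : 0 < m0 := Int.natAbs_pos.mpr hk
    have hpn : (π g) ^ m0 ∈ coCentraliser (π g) := by
      rcases Int.natAbs_eq k with he | he
      · rw [he] at hpow
        rwa [zpow_natCast] at hpow
      · rw [he] at hpow
        have h3 := inv_mem hpow
        rwa [← zpow_neg, neg_neg, zpow_natCast] at h3
    obtain ⟨m, hm, hm1⟩ := key_torsion (π g) m0 hn0 hpn
    have hg1 : (π g : G ⧸ center G) = 1 := quot_center_tf htf (π g) m hm hm1
    exact hg ((QuotientGroup.eq_one_iff g).mp hg1)
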